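/- Let φ and ψ be dual frames for H with upper frame bounds B_φ and B_ψ, and let m ∈ ℓ^∞. If λ, μ ∈ ℂ satisfy (sup_n |m_n − μ|) · B_φ^{1/2} · B_ψ^{1/2} < |μ − λ|, then M_{m,φ,ψ} − λI is boundedly invertible, i.e. λ belongs to the resolvent set of M_{m,φ,ψ}. -/

import Mathlib

open scoped InnerProductSpace

/-- Cauchy–Schwarz for infinite sums of nonnegative reals. -/
lemma tsum_cs_aux {a b : ℕ → ℝ} {A B : ℝ} (ha0 : ∀ n, 0 ≤ a n) (hb0 : ∀ n, 0 ≤ b n)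
    (hA : HasSum (fun n => a n ^ 2) A) (hB : HasSum (fun n => b n ^ 2) B) :
    Summable (fun n => a n * b n) ∧
      ∑' n, a n * b n ≤ Real.sqrt A * Real.sqrt B := by
  have key : ∀ s : Finset ℕ, ∑ n ∈ s, a n * b n ≤ Real.sqrt A * Real.sqrt B := by
    intro s
    refine (Real.sum_mul_le_sqrt_mul_sqrt s a b).trans ?_
    have h1 : ∑ n ∈ s, a n ^ 2 ≤ A := sum_le_hasSum s (fun n _ => sq_nonneg _) hA
    have h2 : ∑ n ∈ s, b n ^ 2 ≤ B := sum_le_hasSum s (fun n _ => sq_nonneg _) hB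
    exact mul_le_mul (Real.sqrt_le_sqrt h1) (Real.sqrt_le_sqrt h2)
      (Real.sqrt_nonneg _) (Real.sqrt_nonneg _)
  have hsum : Summable (fun n => a n * b n) :=
    summable_of_sum_le (fun n => mul_nonneg (ha0 n) (hb0 n)) key
  exact ⟨hsum, hsum.tsum_le_of_sum_le key⟩

/-- for dual frames `φ, ψ`, if `(sup |m n - μ|)·Bφ^(1/2)·Bψ^(1/2) < |μ - λ|`
then `λ` belongs to the resolvent set of the multiplier. -/
theorem resolvent_dual_frames_multiplier
    {H : Type*} [NormedAddCommGroup H] [InnerProductSpace ℂ H] [CompleteSpace H]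
    (φ ψ : ℕ → H) (Aφ Bφ Aψ Bψ : ℝ) (hAφ : 0 < Aφ) (hAψ : 0 < Aψ)
    (hφ : ∀ f : H, ∃ s : ℝ, HasSum (fun n => ‖⟪φ n, f⟫_ℂ‖ ^ 2) s ∧
      Aφ * ‖f‖ ^ 2 ≤ s ∧ s ≤ Bφ * ‖f‖ ^ 2)
    (hψ : ∀ f : H, ∃ s : ℝ, HasSum (fun n => ‖⟪ψ n, f⟫_ℂ‖ ^ 2) s ∧
      Aψ * ‖f‖ ^ 2 ≤ s ∧ s ≤ Bψ * ‖f‖ ^ 2)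
    (hdual : ∀ f : H, HasSum (fun n => ⟪ψ n, f⟫_ℂ • φ n) f)
    (m : ℕ → ℂ) (hm : ∃ C : ℝ, ∀ n, ‖m n‖ ≤ C)
    (M : H →L[ℂ] H)
    (hM : ∀ f : H, HasSum (fun n => (m n * ⟪ψ n, f⟫_ℂ) • φ n) (M f))
    (lam mu : ℂ)
    (hcond : (⨆ n, ‖m n - mu‖) * Real.sqrt Bφ * Real.sqrt Bψ < ‖mu - lam‖) :
    lam ∈ resolventSet ℂ M := by
  rcases subsingleton_or_nontrivial H with hH | hH
  · have : Subsingleton (H →L[ℂ] H) := ⟨fun f g => by ext x; exact Subsingleton.elim _ _⟩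
    rw [spectrum.mem_resolventSet_iff]
    exact isUnit_of_subsingleton _
  -- basic facts
  obtain ⟨C, hC⟩ := hm
  set S : ℝ := ⨆ n, ‖m n - mu‖ with hSdef
  have hbdd : BddAbove (Set.range fun n => ‖m n - mu‖) := by
    refine ⟨C + ‖mu‖, ?_⟩
    rintro x ⟨n, rfl⟩
    exact (norm_sub_le _ _).trans (add_le_add_left (hC n) _)
  have hS : ∀ n, ‖m n - mu‖ ≤ S := fun n => le_ciSup hbdd n
  have hS0 : 0 ≤ S := le_trans (norm_nonneg _) (hS 0)
  -- Bφ, Bψ are nonnegative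
  obtain ⟨f₀, hf₀⟩ := exists_ne (0 : H)
  have hnf₀ : (0:ℝ) < ‖f₀‖ ^ 2 := pow_pos (norm_pos_iff.mpr hf₀) 2
  have hBψ0 : 0 ≤ Bψ := by
    obtain ⟨s, hs, h1, h2⟩ := hψ f₀
    have hs0 : 0 ≤ s := hs.nonneg fun n => by positivity
    nlinarith
  have hBφ0 : 0 ≤ Bφ := by
    obtain ⟨s, hs, h1, h2⟩ := hφ f₀
    have hs0 : 0 ≤ s := hs.nonneg fun n => by positivity
    nlinarith
  -- the operator K = M - mu • 1
  set K : H →L[ℂ] H := M - mu • (1 : H →L[ℂ] H) with hKdef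
  have hKapp : ∀ f : H, K f = M f - mu • f := fun f => rfl
  -- the key norm bound
  have hKbound : ∀ f : H, ‖K f‖ ≤ S * Real.sqrt Bφ * Real.sqrt Bψ * ‖f‖ := by
    intro f
    set c : ℕ → ℂ := fun n => (m n - mu) * ⟪ψ n, f⟫_ℂ with hcdef
    set v : H := K f with hvdef
    have hv : HasSum (fun n => c n • φ n) v := by
      have h1 := (hM f).sub ((hdual f).const_smul mu)
      have : (fun n => (m n * ⟪ψ n, f⟫_ℂ) • φ n - mu • ⟪ψ n, f⟫_ℂ • φ n)
          = fun n => c n • φ n := by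
        funext n
        simp only [hcdef, sub_mul, sub_smul, smul_smul]
      rwa [this] at h1
    have hinner : HasSum (fun n => c n * ⟪v, φ n⟫_ℂ) ((‖v‖ : ℂ) ^ 2) := by
      have h1 := hv.mapL (innerSL ℂ v)
      simp only [innerSL_apply_apply, inner_smul_right] at h1
      rwa [inner_self_eq_norm_sq_to_K] at h1
    obtain ⟨sψ, hsψ, _, hsψB⟩ := hψ f
    obtain ⟨sφ, hsφ, _, hsφB⟩ := hφ v
    have hsφ0 : 0 ≤ sφ := hsφ.nonneg fun n => by positivity
    -- summability of ‖c n‖^2 with bound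
    have hcsq : Summable (fun n => ‖c n‖ ^ 2) := by
      refine Summable.of_nonneg_of_le (fun n => by positivity) (fun n => ?_)
        (hsψ.summable.mul_left (S ^ 2))
      simp only [hcdef, norm_mul, mul_pow]
      exact mul_le_mul_of_nonneg_right (pow_le_pow_left₀ (norm_nonneg _) (hS n) 2)
        (by positivity)
    have hcA : ∑' n, ‖c n‖ ^ 2 ≤ (S * Real.sqrt Bψ * ‖f‖) ^ 2 := by
      have h1 : ∑' n, ‖c n‖ ^ 2 ≤ ∑' n, S ^ 2 * ‖⟪ψ n, f⟫_ℂ‖ ^ 2 := by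
        refine Summable.tsum_le_tsum (fun n => ?_) hcsq (hsψ.summable.mul_left (S ^ 2))
        simp only [hcdef, norm_mul, mul_pow]
        exact mul_le_mul_of_nonneg_right (pow_le_pow_left₀ (norm_nonneg _) (hS n) 2)
          (by positivity)
      have h2 : ∑' n, S ^ 2 * ‖⟪ψ n, f⟫_ℂ‖ ^ 2 = S ^ 2 * sψ := by
        rw [tsum_mul_left, hsψ.tsum_eq]
      have h3 : S ^ 2 * sψ ≤ S ^ 2 * (Bψ * ‖f‖ ^ 2) := by gcongr
      calc ∑' n, ‖c n‖ ^ 2 ≤ S ^ 2 * (Bψ * ‖f‖ ^ 2) := le_trans (h1.trans_eq h2) h3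
        _ = (S * Real.sqrt Bψ * ‖f‖) ^ 2 := by
            rw [mul_pow, mul_pow, Real.sq_sqrt hBψ0]; ring
    -- Cauchy–Schwarz
    have hsymm : (fun n => ‖⟪φ n, v⟫_ℂ‖ ^ 2) = fun n => ‖⟪v, φ n⟫_ℂ‖ ^ 2 := by
      funext n; rw [norm_inner_symm]
    rw [hsymm] at hsφ
    obtain ⟨hsummable, hcs⟩ := tsum_cs_aux (a := fun n => ‖c n‖)
      (b := fun n => ‖⟪v, φ n⟫_ℂ‖) (fun n => norm_nonneg _) (fun n => norm_nonneg _)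
      hcsq.hasSum hsφ
    have hnormsum : Summable (fun n => ‖c n * ⟪v, φ n⟫_ℂ‖) := by
      simpa only [norm_mul] using hsummable
    have hv2 : ‖v‖ ^ 2 ≤ (Real.sqrt (∑' n, ‖c n‖ ^ 2)) * Real.sqrt sφ := by
      have h1 : ‖v‖ ^ 2 = ‖((‖v‖ : ℂ)) ^ 2‖ := by
        rw [norm_pow, Complex.norm_real, norm_norm]
      rw [h1, ← hinner.tsum_eq]
      refine (norm_tsum_le_tsum_norm hnormsum).trans ?_
      simpa only [norm_mul] using hcs
    have hsqrtA : Real.sqrt (∑' n, ‖c n‖ ^ 2) ≤ S * Real.sqrt Bψ * ‖f‖ := by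
      refine (Real.sqrt_le_sqrt hcA).trans_eq (Real.sqrt_sq ?_)
      positivity
    have hsqrtB : Real.sqrt sφ ≤ Real.sqrt Bφ * ‖v‖ := by
      refine (Real.sqrt_le_sqrt hsφB).trans ?_
      rw [Real.sqrt_mul hBφ0, Real.sqrt_sq (norm_nonneg _)]
    have hv3 : ‖v‖ ^ 2 ≤ (S * Real.sqrt Bψ * ‖f‖) * (Real.sqrt Bφ * ‖v‖) := by
      refine hv2.trans (mul_le_mul hsqrtA hsqrtB (Real.sqrt_nonneg _) ?_)
      positivity
    rcases eq_or_ne ‖v‖ 0 with hv0 | hv0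
    · rw [hv0]; positivity
    · have hvpos : 0 < ‖v‖ := lt_of_le_of_ne (norm_nonneg _) (Ne.symm hv0)
      nlinarith [Real.sqrt_nonneg Bφ, Real.sqrt_nonneg Bψ, norm_nonneg f, hS0]
  -- operator norm bound
  have hKnorm : ‖K‖ ≤ S * Real.sqrt Bφ * Real.sqrt Bψ :=
    K.opNorm_le_bound (by positivity) hKbound
  -- λ - μ is nonzero
  have hlm : lam - mu ≠ 0 := by
    intro h
    have : mu - lam = 0 := by
      have := neg_eq_zero.mpr h; rw [neg_sub] at this; exact this
    rw [this, norm_zero] at hcond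
    have : (0:ℝ) ≤ S * Real.sqrt Bφ * Real.sqrt Bψ := by positivity
    linarith
  -- the perturbation t
  set t : H →L[ℂ] H := (lam - mu)⁻¹ • K with htdef
  have hKlt : ‖K‖ < ‖lam - mu‖ := by
    rw [← norm_sub_rev mu lam]
    exact lt_of_le_of_lt hKnorm hcond
  have htnorm : ‖t‖ < 1 := by
    rw [htdef, norm_smul, norm_inv]
    rw [inv_mul_lt_iff₀ (by simpa using norm_pos_iff.mpr hlm), mul_one]
    exact hKlt
  have hu2 : IsUnit ((1 : H →L[ℂ] H) - t) := isUnit_one_sub_of_norm_lt_one htnorm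
  have hu1 : IsUnit ((lam - mu) • (1 : H →L[ℂ] H)) := by
    rw [← Algebra.algebraMap_eq_smul_one]
    exact (isUnit_iff_ne_zero.mpr hlm).map (algebraMap ℂ (H →L[ℂ] H))
  rw [spectrum.mem_resolventSet_iff]
  have hfact : (algebraMap ℂ (H →L[ℂ] H)) lam - M
      = ((lam - mu) • (1 : H →L[ℂ] H)) * ((1 : H →L[ℂ] H) - t) := by
    rw [Algebra.algebraMap_eq_smul_one, smul_mul_assoc, one_mul, smul_sub, htdef,
      smul_smul, mul_inv_cancel₀ hlm, one_smul, hKdef, sub_smul]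
    abel
  rw [hfact]
  exact hu1.mul hu2
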